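/- Let the parameters lie in P_NI ∪ P_SP,1 (equivalently, α_H·β_A − α_A·β_H = 0 with (β_A,α_A) ≠ (β_H,α_H)). Then for every initial size ω₀ ≥ 1 and every horizon n ≥ 1, the relative entropy I_n has the exact value: if β_A ≠ 1, I_n = ((β_A·(log(β_A/β_H) − 1) + β_H)/(1 − β_A))·(ω₀ − α_A/(1 − β_A))·(1 − β_A^n) + (α_A·(β_A·(log(β_A/β_H) − 1) + β_H)/(β_A·(1 − β_A)))·n; if β_A = 1, I_n = (β_H − log β_H − 1)·( (α_A/2)·n² + (ω₀ + α_A/2)·n ). -/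

import Mathlib

open Real Filter

/-- One transition weight of the Poisson Galton–Watson process with immigration:
probability that the next generation size is `y` given the previous size is `x`. -/
noncomputable def gwStep (β α : ℝ) (x y : ℕ) : ℝ :=
  Real.exp (-(β * (x : ℝ) + α)) * (β * (x : ℝ) + α) ^ y / (Nat.factorial y : ℝ)

/-- The `n`-step path law (pmf on `Fin n → ℕ`) with initial generation size `ω₀`. -/
noncomputable def gwPath (β α : ℝ) (ω₀ n : ℕ) (ω : Fin n → ℕ) : ℝ :=
  ∏ k : Fin n,
    gwStep β α
      (if (k : ℕ) = 0 then ω₀ else ω ⟨(k : ℕ) - 1, Nat.lt_of_le_of_lt (Nat.sub_le _ _) k.2⟩)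
      (ω k)

/-- Relative entropy between the `n`-step path laws (summands with vanishing
`p_A` contribute `0`, since they are multiplied by `p_A`). -/
noncomputable def relEnt (βA αA βH αH : ℝ) (ω₀ n : ℕ) : ℝ :=
  ∑' ω : Fin n → ℕ,
    gwPath βA αA ω₀ n ω * Real.log (gwPath βA αA ω₀ n ω / gwPath βH αH ω₀ n ω)

/-! ### Auxiliary lemmas -/

section Aux

open Finset

/-- Previous generation size seen from step `k`. -/
def prevGen (x : ℕ) {n : ℕ} (ω : Fin n → ℕ) (k : Fin n) : ℕ :=
  if (k : ℕ) = 0 then x else ω ⟨(k : ℕ) - 1, Nat.lt_of_le_of_lt (Nat.sub_le _ _) k.2⟩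

lemma gwPath_eq_prod (β α : ℝ) (x n : ℕ) (ω : Fin n → ℕ) :
    gwPath β α x n ω = ∏ k : Fin n, gwStep β α (prevGen x ω k) (ω k) := rfl

lemma poisson_hasSum {l : ℝ} (hl : 0 ≤ l) :
    HasSum (fun y : ℕ => Real.exp (-l) * l ^ y / (Nat.factorial y : ℝ)) 1 := by
  have h := ProbabilityTheory.poissonPMFRealSum l.toNNReal
  simp only [ProbabilityTheory.poissonPMFReal, Real.coe_toNNReal l hl] at h
  exact h

lemma poisson_mean {l : ℝ} (hl : 0 ≤ l) :
    HasSum (fun y : ℕ => Real.exp (-l) * l ^ y / (Nat.factorial y : ℝ) * y) l := by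
  have h1 : HasSum (fun y : ℕ => l * (Real.exp (-l) * l ^ y / (Nat.factorial y : ℝ))) l := by
    simpa using (poisson_hasSum hl).mul_left l
  have key : (fun y : ℕ =>
      Real.exp (-l) * l ^ (y + 1) / (Nat.factorial (y + 1) : ℝ) * ((y + 1 : ℕ) : ℝ))
      = fun y : ℕ => l * (Real.exp (-l) * l ^ y / (Nat.factorial y : ℝ)) := by
    funext y
    have h0 : (Nat.factorial y : ℝ) ≠ 0 := Nat.cast_ne_zero.mpr (Nat.factorial_ne_zero y)
    have hy : ((Nat.factorial (y + 1) : ℝ)) = ((y : ℝ) + 1) * Nat.factorial y := by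
      rw [Nat.factorial_succ]; push_cast; ring
    have h1' : ((y : ℝ) + 1) ≠ 0 := by positivity
    rw [hy]
    push_cast
    field_simp
    ring
  have h3 : HasSum
      (fun y : ℕ => Real.exp (-l) * l ^ (y + 1) / (Nat.factorial (y + 1) : ℝ) * ((y + 1 : ℕ) : ℝ))
      l := key ▸ h1
  have h4 := (hasSum_nat_add_iff
      (f := fun y : ℕ => Real.exp (-l) * l ^ y / (Nat.factorial y : ℝ) * (y : ℝ)) 1).mp h3
  simpa using h4

lemma gwStep_nonneg {β α : ℝ} (hβ : 0 ≤ β) (hα : 0 ≤ α) (x y : ℕ) : 0 ≤ gwStep β α x y := by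
  have hl : (0 : ℝ) ≤ β * x + α := by positivity
  exact div_nonneg (mul_nonneg (Real.exp_pos _).le (pow_nonneg hl _)) (Nat.cast_nonneg _)

lemma gwStep_hasSum {β α : ℝ} (hβ : 0 ≤ β) (hα : 0 ≤ α) (x : ℕ) :
    HasSum (gwStep β α x) 1 := by
  have hl : (0 : ℝ) ≤ β * x + α := by positivity
  exact poisson_hasSum hl

lemma gwStep_mean {β α : ℝ} (hβ : 0 ≤ β) (hα : 0 ≤ α) (x : ℕ) :
    HasSum (fun y : ℕ => gwStep β α x y * y) (β * x + α) := by
  have hl : (0 : ℝ) ≤ β * x + α := by positivity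
  exact poisson_mean hl

lemma gwPath_nonneg {β α : ℝ} (hβ : 0 ≤ β) (hα : 0 ≤ α) (x n : ℕ) (ω : Fin n → ℕ) :
    0 ≤ gwPath β α x n ω :=
  Finset.prod_nonneg fun _ _ => gwStep_nonneg hβ hα _ _

lemma gwPath_cons (β α : ℝ) (x : ℕ) {n : ℕ} (y : ℕ) (ω : Fin n → ℕ) :
    gwPath β α x (n + 1) (Fin.cons y ω) = gwStep β α x y * gwPath β α y n ω := by
  rw [gwPath_eq_prod, gwPath_eq_prod, Fin.prod_univ_succ]
  have h0 : gwStep β α (prevGen x (Fin.cons y ω) 0) ((Fin.cons y ω : Fin (n+1) → ℕ) 0) = gwStep β α x y := by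
    simp [prevGen]
  rw [h0]
  congr 1
  refine Finset.prod_congr rfl fun k _ => ?_
  have h1 : (Fin.cons y ω : Fin (n+1) → ℕ) k.succ = ω k :=
    Fin.cons_succ (α := fun _ : Fin (n+1) => ℕ) y ω k
  have h2 : prevGen x (Fin.cons y ω) k.succ = prevGen y ω k := by
    simp only [prevGen, Fin.val_succ, Nat.add_sub_cancel]
    rw [if_neg (Nat.succ_ne_zero _)]
    rcases k with ⟨kv, hk⟩
    cases kv with
    | zero =>
        rw [if_pos rfl]
        exact Fin.cons_zero (α := fun _ : Fin (n+1) => ℕ) y ω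
    | succ j =>
        rw [if_neg (Nat.succ_ne_zero _)]
        exact Fin.cons_succ (α := fun _ : Fin (n+1) => ℕ) y ω ⟨j, by omega⟩
  rw [h1, h2]

/-- Combine a Poisson step with a fiberwise sum over paths (all terms nonnegative). -/
lemma hasSum_step_mul {n : ℕ} {a : ℕ → ℝ} {g : ℕ → (Fin n → ℕ) → ℝ} {t : ℕ → ℝ} {s : ℝ}
    (ha : ∀ y, 0 ≤ a y) (hg : ∀ y ω, 0 ≤ g y ω)
    (hgt : ∀ y, HasSum (g y) (t y)) (hat : HasSum (fun y => a y * t y) s) :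
    HasSum (fun p : ℕ × (Fin n → ℕ) => a p.1 * g p.1 p.2) s := by
  have hF : ∀ p : ℕ × (Fin n → ℕ), 0 ≤ a p.1 * g p.1 p.2 :=
    fun p => mul_nonneg (ha _) (hg _ _)
  have hfib : ∀ y, Summable fun ω => a y * g y ω := fun y => ((hgt y).mul_left _).summable
  have htm : ∀ y, (∑' ω, a y * g y ω) = a y * t y := fun y => ((hgt y).mul_left (a y)).tsum_eq
  have hsum : Summable (fun p : ℕ × (Fin n → ℕ) => a p.1 * g p.1 p.2) := by
    rw [summable_prod_of_nonneg hF]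
    refine ⟨hfib, ?_⟩
    have h' : (fun y => ∑' ω, a y * g y ω) = fun y => a y * t y := funext htm
    rw [h']
    exact hat.summable
  have hval : (∑' p : ℕ × (Fin n → ℕ), a p.1 * g p.1 p.2) = s := by
    rw [Summable.tsum_prod' hsum hfib]
    calc (∑' y, ∑' ω, a y * g y ω) = ∑' y, a y * t y := tsum_congr htm
      _ = s := hat.tsum_eq
  exact hval ▸ hsum.hasSum

lemma gwPath_hasSum {β α : ℝ} (hβ : 0 ≤ β) (hα : 0 ≤ α) :
    ∀ (n x : ℕ), HasSum (gwPath β α x n) 1 := by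
  intro n
  induction n with
  | zero =>
      intro x
      have h1 : gwPath β α x 0 = fun _ => 1 := by
        funext ω; rw [gwPath_eq_prod]; simp
      rw [h1]
      exact hasSum_single default fun b hb => absurd (Subsingleton.elim b default) hb
  | succ n ih =>
      intro x
      refine (Equiv.hasSum_iff (Fin.consEquiv fun _ : Fin (n + 1) => ℕ)).mp ?_
      have hcomp : (gwPath β α x (n + 1)) ∘ (Fin.consEquiv fun _ : Fin (n + 1) => ℕ)
          = fun p : ℕ × (Fin n → ℕ) => gwStep β α x p.1 * gwPath β α p.1 n p.2 := by
        funext p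
        show gwPath β α x (n + 1) (Fin.cons p.1 p.2) = _
        exact gwPath_cons β α x p.1 p.2
      rw [hcomp]
      refine hasSum_step_mul (a := gwStep β α x) (g := fun y => gwPath β α y n)
        (t := fun _ => 1) (gwStep_nonneg hβ hα x) (fun y ω => gwPath_nonneg hβ hα y n ω)
        (fun y => ih y) ?_
      simpa using gwStep_hasSum hβ hα x

/-- Mean of generation `k` started from `x`. -/
noncomputable def mseq (β α : ℝ) (x k : ℕ) : ℝ :=
  β ^ k * x + α * ∑ i ∈ Finset.range k, β ^ i

lemma mseq_succ (β α : ℝ) (x k : ℕ) : mseq β α x (k + 1) = β * mseq β α x k + α := by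
  unfold mseq
  rw [geom_sum_succ]
  ring

lemma mseq_zero (β α : ℝ) (x : ℕ) : mseq β α x 0 = x := by simp [mseq]

lemma gwPath_moment {β α : ℝ} (hβ : 0 ≤ β) (hα : 0 ≤ α) :
    ∀ (n x : ℕ) (k : Fin n),
      HasSum (fun ω : Fin n → ℕ => gwPath β α x n ω * ((ω k : ℕ) : ℝ))
        (mseq β α x ((k : ℕ) + 1)) := by
  intro n
  induction n with
  | zero => intro x k; exact absurd k.2 (by omega)
  | succ n ih =>
      intro x k
      refine (Equiv.hasSum_iff (Fin.consEquiv fun _ : Fin (n + 1) => ℕ)).mp ?_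
      induction k using Fin.cases with
      | zero =>
          have hcomp : (fun ω : Fin (n + 1) → ℕ => gwPath β α x (n + 1) ω * ((ω 0 : ℕ) : ℝ))
              ∘ (Fin.consEquiv fun _ : Fin (n + 1) => ℕ)
              = fun p : ℕ × (Fin n → ℕ) =>
                  (gwStep β α x p.1 * (p.1 : ℝ)) * gwPath β α p.1 n p.2 := by
            funext p
            show gwPath β α x (n + 1) (Fin.cons p.1 p.2) * (((Fin.cons p.1 p.2 : Fin (n+1) → ℕ) 0 : ℕ) : ℝ) = _
            rw [gwPath_cons, Fin.cons_zero]
            ring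
          rw [hcomp]
          refine hasSum_step_mul (a := fun y => gwStep β α x y * (y : ℝ))
            (g := fun y => gwPath β α y n) (t := fun _ => 1)
            (fun y => mul_nonneg (gwStep_nonneg hβ hα x y) (Nat.cast_nonneg y))
            (fun y ω => gwPath_nonneg hβ hα y n ω)
            (fun y => gwPath_hasSum hβ hα n y) ?_
          have hm : mseq β α x (((0 : Fin (n+1)) : ℕ) + 1) = β * x + α := by
            rw [show ((0 : Fin (n+1)) : ℕ) = 0 from rfl, mseq_succ, mseq_zero]
          rw [hm]
          simpa using gwStep_mean hβ hα x
      | succ j =>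
          have hcomp : (fun ω : Fin (n + 1) → ℕ
                => gwPath β α x (n + 1) ω * ((ω j.succ : ℕ) : ℝ))
              ∘ (Fin.consEquiv fun _ : Fin (n + 1) => ℕ)
              = fun p : ℕ × (Fin n → ℕ) =>
                  gwStep β α x p.1 * (gwPath β α p.1 n p.2 * ((p.2 j : ℕ) : ℝ)) := by
            funext p
            show gwPath β α x (n + 1) (Fin.cons p.1 p.2) * (((Fin.cons p.1 p.2 : Fin (n+1) → ℕ) j.succ : ℕ) : ℝ) = _
            rw [gwPath_cons, Fin.cons_succ]
            ring
          rw [hcomp]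
          refine hasSum_step_mul (a := gwStep β α x)
            (g := fun y ω => gwPath β α y n ω * ((ω j : ℕ) : ℝ))
            (t := fun y => mseq β α y ((j : ℕ) + 1)) (gwStep_nonneg hβ hα x)
            (fun y ω => mul_nonneg (gwPath_nonneg hβ hα y n ω) (Nat.cast_nonneg _))
            (fun y => ih y j) ?_
          have hfun : (fun y : ℕ => gwStep β α x y * mseq β α y ((j : ℕ) + 1))
              = fun y : ℕ => β ^ ((j : ℕ) + 1) * (gwStep β α x y * y)
                  + (α * ∑ i ∈ Finset.range ((j : ℕ) + 1), β ^ i) * gwStep β α x y := by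
            funext y
            unfold mseq
            ring
          have hval : mseq β α x ((j.succ : ℕ) + 1)
              = β ^ ((j : ℕ) + 1) * (β * x + α)
                  + (α * ∑ i ∈ Finset.range ((j : ℕ) + 1), β ^ i) * 1 := by
            unfold mseq
            rw [Fin.val_succ, Finset.sum_range_succ]
            ring
          rw [hfun, hval]
          exact ((gwStep_mean hβ hα x).mul_left _).add ((gwStep_hasSum hβ hα x).mul_left _)

section Dominance

variable {βA βH αA αH : ℝ}

lemma lam_rel (hrel : αH * βA = αA * βH) (x : ℕ) :
    βA * (βH * x + αH) = βH * (βA * x + αA) := by linear_combination hrel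

lemma gwStep_pos_of (hβA : 0 < βA) (hβH : 0 < βH) (hαA : 0 ≤ αA) (hαH : 0 ≤ αH)
    (hrel : αH * βA = αA * βH) {x y : ℕ} (h : gwStep βA αA x y ≠ 0) :
    0 < gwStep βH αH x y := by
  have hlA : (0 : ℝ) ≤ βA * x + αA := by positivity
  have hlH : (0 : ℝ) ≤ βH * x + αH := by positivity
  cases y with
  | zero =>
      simp only [gwStep, pow_zero, mul_one, Nat.factorial_zero, Nat.cast_one, div_one]
      exact Real.exp_pos _
  | succ y =>
      have hpow : (βA * x + αA) ^ (y + 1) ≠ 0 := by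
        intro h0
        apply h
        simp [gwStep, h0]
      have hlA' : (0 : ℝ) < βA * x + αA := lt_of_le_of_ne hlA (by
        intro h0; exact hpow (by rw [← h0]; simp))
      have hlH' : (0 : ℝ) < βH * x + αH := by
        have hk := lam_rel hrel x
        nlinarith
      have hf : (0:ℝ) < Nat.factorial (y+1) := by positivity
      exact div_pos (mul_pos (Real.exp_pos _) (pow_pos hlH' _)) hf

lemma gwStep_log (hβA : 0 < βA) (hβH : 0 < βH) (hαA : 0 ≤ αA) (hαH : 0 ≤ αH)
    (hrel : αH * βA = αA * βH) {x y : ℕ} (h : gwStep βA αA x y ≠ 0) :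
    Real.log (gwStep βA αA x y) - Real.log (gwStep βH αH x y)
      = ((βH - βA) * x + (αH - αA)) + (y : ℝ) * Real.log (βA / βH) := by
  have hlA : (0 : ℝ) ≤ βA * x + αA := by positivity
  have hlH : (0 : ℝ) ≤ βH * x + αH := by positivity
  cases y with
  | zero =>
      simp only [gwStep, pow_zero, mul_one, Nat.factorial_zero, Nat.cast_one, div_one,
        Real.log_exp, Nat.cast_zero]
      ring
  | succ y =>
      have hpow : (βA * x + αA) ^ (y + 1) ≠ 0 := by
        intro h0
        apply h
        simp [gwStep, h0]
      have hlA' : (0 : ℝ) < βA * x + αA := lt_of_le_of_ne hlA (by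
        intro h0; exact hpow (by rw [← h0]; simp))
      have hlH' : (0 : ℝ) < βH * x + αH := by
        have hk := lam_rel hrel x
        nlinarith
      have hfac : ((Nat.factorial (y + 1) : ℝ)) ≠ 0 :=
        Nat.cast_ne_zero.mpr (Nat.factorial_ne_zero _)
      have hlogstep : ∀ (l : ℝ), 0 < l →
          Real.log (Real.exp (-l) * l ^ (y + 1) / (Nat.factorial (y + 1) : ℝ))
            = -l + ((y : ℝ) + 1) * Real.log l - Real.log (Nat.factorial (y + 1)) := by
        intro l hl
        rw [Real.log_div (by positivity) hfac, Real.log_mul (Real.exp_ne_zero _)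
          (pow_ne_zero _ hl.ne'), Real.log_exp, Real.log_pow]
        push_cast
        ring
      rw [show gwStep βA αA x (y+1)
            = Real.exp (-(βA * x + αA)) * (βA * x + αA) ^ (y + 1) / (Nat.factorial (y + 1) : ℝ)
          from rfl,
        show gwStep βH αH x (y+1)
            = Real.exp (-(βH * x + αH)) * (βH * x + αH) ^ (y + 1) / (Nat.factorial (y + 1) : ℝ)
          from rfl,
        hlogstep _ hlA', hlogstep _ hlH']
      have hratio : Real.log (βA * x + αA) - Real.log (βH * x + αH) = Real.log (βA / βH) := by
        rw [← Real.log_div hlA'.ne' hlH'.ne']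
        congr 1
        rw [div_eq_div_iff hlH'.ne' hβH.ne']
        linear_combination -hrel
      push_cast
      linear_combination ((y : ℝ) + 1) * hratio

lemma gwPath_pos_of (hβA : 0 < βA) (hβH : 0 < βH) (hαA : 0 ≤ αA) (hαH : 0 ≤ αH)
    (hrel : αH * βA = αA * βH) {x n : ℕ} {ω : Fin n → ℕ}
    (h : gwPath βA αA x n ω ≠ 0) : 0 < gwPath βH αH x n ω := by
  rw [gwPath_eq_prod] at h ⊢
  have h' := Finset.prod_ne_zero_iff.mp h
  exact Finset.prod_pos fun k hk =>
    gwStep_pos_of hβA hβH hαA hαH hrel (h' k hk)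

lemma gwPath_log (hβA : 0 < βA) (hβH : 0 < βH) (hαA : 0 ≤ αA) (hαH : 0 ≤ αH)
    (hrel : αH * βA = αA * βH) (x n : ℕ) (ω : Fin n → ℕ) :
    gwPath βA αA x n ω * Real.log (gwPath βA αA x n ω / gwPath βH αH x n ω)
      = gwPath βA αA x n ω * ∑ k : Fin n,
          (((βH - βA) * (prevGen x ω k : ℝ) + (αH - αA))
            + ((ω k : ℕ) : ℝ) * Real.log (βA / βH)) := by
  by_cases hz : gwPath βA αA x n ω = 0
  · rw [hz]; ring
  · congr 1
    have hA : ∀ k ∈ Finset.univ (α := Fin n), gwStep βA αA (prevGen x ω k) (ω k) ≠ 0 := by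
      rw [gwPath_eq_prod] at hz
      exact Finset.prod_ne_zero_iff.mp hz
    have hH : ∀ k ∈ Finset.univ (α := Fin n), gwStep βH αH (prevGen x ω k) (ω k) ≠ 0 :=
      fun k hk => (gwStep_pos_of hβA hβH hαA hαH hrel (hA k hk)).ne'
    have hzH : gwPath βH αH x n ω ≠ 0 := (gwPath_pos_of hβA hβH hαA hαH hrel hz).ne'
    rw [Real.log_div hz hzH, gwPath_eq_prod, gwPath_eq_prod,
      Real.log_prod hA, Real.log_prod hH, ← Finset.sum_sub_distrib]
    exact Finset.sum_congr rfl fun k hk =>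
      gwStep_log hβA hβH hαA hαH hrel (hA k hk)

lemma relEnt_hasSum (hβA : 0 < βA) (hβH : 0 < βH) (hαA : 0 ≤ αA) (hαH : 0 ≤ αH)
    (hrel : αH * βA = αA * βH) (x n : ℕ) :
    HasSum (fun ω : Fin n → ℕ =>
        gwPath βA αA x n ω * Real.log (gwPath βA αA x n ω / gwPath βH αH x n ω))
      (∑ k ∈ Finset.range n,
        (((βH - βA) * mseq βA αA x k + (αH - αA))
          + Real.log (βA / βH) * mseq βA αA x (k + 1))) := by
  have hfun : (fun ω : Fin n → ℕ =>
      gwPath βA αA x n ω * Real.log (gwPath βA αA x n ω / gwPath βH αH x n ω))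
      = fun ω : Fin n → ℕ => ∑ k : Fin n,
          ((βH - βA) * (gwPath βA αA x n ω * (prevGen x ω k : ℝ))
            + (αH - αA) * gwPath βA αA x n ω
            + Real.log (βA / βH) * (gwPath βA αA x n ω * ((ω k : ℕ) : ℝ))) := by
    funext ω
    rw [gwPath_log hβA hβH hαA hαH hrel x n ω, Finset.mul_sum]
    exact Finset.sum_congr rfl fun k _ => by ring
  rw [hfun, ← Fin.sum_univ_eq_sum_range
    (fun k => ((βH - βA) * mseq βA αA x k + (αH - αA))
      + Real.log (βA / βH) * mseq βA αA x (k + 1)) n]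
  refine hasSum_sum fun k _ => ?_
  have hprev : HasSum (fun ω : Fin n → ℕ => gwPath βA αA x n ω * (prevGen x ω k : ℝ))
      (mseq βA αA x (k : ℕ)) := by
    by_cases h0 : (k : ℕ) = 0
    · have he : (fun ω : Fin n → ℕ => gwPath βA αA x n ω * (prevGen x ω k : ℝ))
          = fun ω : Fin n → ℕ => gwPath βA αA x n ω * (x : ℝ) := by
        funext ω; simp only [prevGen]; rw [if_pos h0]
      rw [he, h0, mseq_zero]
      simpa using (gwPath_hasSum hβA.le hαA n x).mul_right (x : ℝ)
    · obtain ⟨j, hj⟩ : ∃ j : ℕ, (k : ℕ) = j + 1 := ⟨(k : ℕ) - 1, by omega⟩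
      have hjn : j < n := by omega
      have he : (fun ω : Fin n → ℕ => gwPath βA αA x n ω * (prevGen x ω k : ℝ))
          = fun ω : Fin n → ℕ => gwPath βA αA x n ω * ((ω ⟨j, hjn⟩ : ℕ) : ℝ) := by
        funext ω
        simp only [prevGen]
        rw [if_neg h0]
        have hj' : (k : ℕ) - 1 = j := by omega
        simp [hj']
      rw [he, hj]
      exact gwPath_moment hβA.le hαA n x ⟨j, hjn⟩
  have hcur : HasSum (fun ω : Fin n → ℕ => gwPath βA αA x n ω * ((ω k : ℕ) : ℝ))
      (mseq βA αA x ((k : ℕ) + 1)) := gwPath_moment hβA.le hαA n x k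
  have hmass : HasSum (fun ω : Fin n → ℕ => gwPath βA αA x n ω) 1 :=
    gwPath_hasSum hβA.le hαA n x
  have hh := ((hprev.mul_left (βH - βA)).add (hmass.mul_left (αH - αA))).add
    (hcur.mul_left (Real.log (βA / βH)))
  simpa [mul_one] using hh

end Dominance

end Aux

/-- Closed-form exact value of the relative entropy on
`P_NI ∪ P_SP,1` (i.e. `α_H·β_A − α_A·β_H = 0` with `(β_A,α_A) ≠ (β_H,α_H)`). -/
theorem relEnt_exact_value (βA βH αA αH : ℝ) (hβA : 0 < βA) (hβH : 0 < βH)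
    (hclass : (αA = 0 ∧ αH = 0 ∧ βA ≠ βH) ∨
      (0 < αA ∧ 0 < αH ∧ βA ≠ βH ∧ αA ≠ αH ∧ βA / βH = αA / αH))
    (ω₀ : ℕ) (hω₀ : 1 ≤ ω₀) (n : ℕ) (hn : 1 ≤ n) :
    (βA ≠ 1 → relEnt βA αA βH αH ω₀ n =
      ((βA * (Real.log (βA / βH) - 1) + βH) / (1 - βA)) * ((ω₀ : ℝ) - αA / (1 - βA))
          * (1 - βA ^ n)
        + (αA * (βA * (Real.log (βA / βH) - 1) + βH) / (βA * (1 - βA))) * (n : ℝ)) ∧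
    (βA = 1 → relEnt βA αA βH αH ω₀ n =
      (βH - Real.log βH - 1) * ((αA / 2) * (n : ℝ) ^ 2 + ((ω₀ : ℝ) + αA / 2) * (n : ℝ))) := by
  classical
  have hαA : 0 ≤ αA := by
    rcases hclass with ⟨h1, _, _⟩ | ⟨h1, _⟩
    · exact h1.ge
    · exact h1.le
  have hαH : 0 ≤ αH := by
    rcases hclass with ⟨_, h2, _⟩ | ⟨_, h2, _⟩
    · exact h2.ge
    · exact h2.le
  have hrel : αH * βA = αA * βH := by
    rcases hclass with ⟨h1, h2, _⟩ | ⟨_, h2, _, _, h5⟩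
    · rw [h1, h2]; ring
    · rw [div_eq_div_iff hβH.ne' h2.ne'] at h5
      linarith
  set L := Real.log (βA / βH) with hL
  set C := βA * (L - 1) + βH with hC
  have hent := relEnt_hasSum hβA hβH hαA hαH hrel ω₀ n
  have hval : relEnt βA αA βH αH ω₀ n
      = ∑ k ∈ Finset.range n,
          (((βH - βA) * mseq βA αA ω₀ k + (αH - αA)) + L * mseq βA αA ω₀ (k + 1)) :=
    hent.tsum_eq
  have hαHval : αH = αA * βH / βA := by
    field_simp
    linarith
  have hsummand : ∀ k : ℕ,
      ((βH - βA) * mseq βA αA ω₀ k + (αH - αA)) + L * mseq βA αA ω₀ (k + 1)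
        = C * mseq βA αA ω₀ k + (αA / βA) * C := by
    intro k
    rw [mseq_succ, hαHval, hC]
    field_simp
    ring
  have hval2 : relEnt βA αA βH αH ω₀ n
      = C * (∑ k ∈ Finset.range n, mseq βA αA ω₀ k) + (n : ℝ) * ((αA / βA) * C) := by
    rw [hval]
    calc (∑ k ∈ Finset.range n,
          (((βH - βA) * mseq βA αA ω₀ k + (αH - αA)) + L * mseq βA αA ω₀ (k + 1)))
        = ∑ k ∈ Finset.range n, (C * mseq βA αA ω₀ k + (αA / βA) * C) :=
          Finset.sum_congr rfl fun k _ => hsummand k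
      _ = C * (∑ k ∈ Finset.range n, mseq βA αA ω₀ k) + (n : ℝ) * ((αA / βA) * C) := by
          rw [Finset.sum_add_distrib, ← Finset.mul_sum, Finset.sum_const,
            Finset.card_range, nsmul_eq_mul]
  constructor
  · -- βA ≠ 1
    intro hβ1
    have hb1 : βA - 1 ≠ 0 := sub_ne_zero.mpr hβ1
    have hb1' : (1 : ℝ) - βA ≠ 0 := fun h => hβ1 (by linarith)
    have hgeom : ∀ m : ℕ, (∑ i ∈ Finset.range m, βA ^ i) = (βA ^ m - 1) / (βA - 1) :=
      fun m => geom_sum_eq hβ1 m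
    have hsumG : (∑ k ∈ Finset.range n, ∑ i ∈ Finset.range k, βA ^ i)
        = ((βA ^ n - 1) / (βA - 1) - n) / (βA - 1) := by
      calc (∑ k ∈ Finset.range n, ∑ i ∈ Finset.range k, βA ^ i)
          = ∑ k ∈ Finset.range n, ((βA ^ k - 1) / (βA - 1)) :=
            Finset.sum_congr rfl fun k _ => hgeom k
        _ = ((∑ k ∈ Finset.range n, βA ^ k) - n) / (βA - 1) := by
            rw [← Finset.sum_div, Finset.sum_sub_distrib, Finset.sum_const,
              Finset.card_range, nsmul_eq_mul, mul_one]
        _ = ((βA ^ n - 1) / (βA - 1) - n) / (βA - 1) := by rw [hgeom n]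
    have hsum_mseq : (∑ k ∈ Finset.range n, mseq βA αA ω₀ k)
        = (ω₀ : ℝ) * ((βA ^ n - 1) / (βA - 1))
          + αA * (((βA ^ n - 1) / (βA - 1) - n) / (βA - 1)) := by
      unfold mseq
      rw [Finset.sum_add_distrib, ← Finset.sum_mul, ← Finset.mul_sum, hgeom n, hsumG]
      ring
    rw [hval2, hsum_mseq, hC]
    field_simp
    ring
  · -- βA = 1
    intro hβ1
    have hLval : L = -Real.log βH := by
      rw [hL, hβ1, one_div, Real.log_inv]
    have hmseq1 : ∀ k : ℕ, mseq βA αA ω₀ k = (ω₀ : ℝ) + αA * k := by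
      intro k
      unfold mseq
      rw [hβ1]
      simp
    have hgauss : ∀ m : ℕ, (∑ k ∈ Finset.range m, (k : ℝ)) = (m : ℝ) * ((m : ℝ) - 1) / 2 := by
      intro m
      induction m with
      | zero => simp
      | succ m ih =>
          rw [Finset.sum_range_succ, ih]
          push_cast
          ring
    have hsum_mseq : (∑ k ∈ Finset.range n, mseq βA αA ω₀ k)
        = (n : ℝ) * (ω₀ : ℝ) + αA * ((n : ℝ) * ((n : ℝ) - 1) / 2) := by
      calc (∑ k ∈ Finset.range n, mseq βA αA ω₀ k)
          = ∑ k ∈ Finset.range n, ((ω₀ : ℝ) + αA * k) :=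
            Finset.sum_congr rfl fun k _ => hmseq1 k
        _ = (n : ℝ) * (ω₀ : ℝ) + αA * ((n : ℝ) * ((n : ℝ) - 1) / 2) := by
            rw [Finset.sum_add_distrib, ← Finset.mul_sum, hgauss n, Finset.sum_const,
              Finset.card_range, nsmul_eq_mul]
    have hCval : C = βH - Real.log βH - 1 := by
      rw [hC, hLval, hβ1]; ring
    rw [hval2, hsum_mseq, hCval, hβ1]
    ring
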